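/- Let L be a real symmetric positive semidefinite n×n matrix with eigenvalues 0 = λ₁ < λ₂ ≤ … ≤ λ_n, eigenvector 𝟙 for eigenvalue 0, and let E, C^T be vectors in ℝ^n orthogonal to 𝟙. Then the H∞-norm of the transfer function G(s) = C (sI + L)^{-1} E, i.e., sup over real ω of |C (jωI + L)^{-1} E|, is at most ‖C‖₂ ‖E‖₂ / λ₂. -/

import Mathlib

open Matrix

private lemma cs_sqrt {n : ℕ} (f g : Fin n → ℝ) :
    ∑ i, f i * g i ≤ Real.sqrt (∑ i, f i ^ 2) * Real.sqrt (∑ i, g i ^ 2) := by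
  have h := Finset.sum_mul_sq_le_sq_mul_sq Finset.univ f g
  calc ∑ i, f i * g i ≤ |∑ i, f i * g i| := le_abs_self _
    _ = Real.sqrt ((∑ i, f i * g i) ^ 2) := (Real.sqrt_sq_eq_abs _).symm
    _ ≤ Real.sqrt ((∑ i, f i ^ 2) * ∑ i, g i ^ 2) := Real.sqrt_le_sqrt h
    _ = _ := Real.sqrt_mul (by positivity) _

set_option maxHeartbeats 2000000 in
/-- For a PSD Laplacian `L` with `L𝟙 = 0` and spectral gap `λ₂ > 0` on `𝟙^⊥`, and vectors
`C, E ⊥ 𝟙`, the H∞-norm `sup_ω |C(jωI + L)⁻¹E|` is at most `‖C‖₂‖E‖₂/λ₂`. -/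
theorem stmt_8 {n : ℕ} (L : Matrix (Fin n) (Fin n) ℝ) (hL : L.PosSemidef)
    (hL1 : L *ᵥ (fun _ => (1 : ℝ)) = 0) (lam2 : ℝ) (hlam2 : 0 < lam2)
    (hgap : ∀ x : Fin n → ℝ, x ⬝ᵥ (fun _ => (1 : ℝ)) = 0 →
      lam2 * (∑ i, x i ^ 2) ≤ x ⬝ᵥ (L *ᵥ x))
    (C E : Fin n → ℝ) (hC : C ⬝ᵥ (fun _ => (1 : ℝ)) = 0)
    (hE : E ⬝ᵥ (fun _ => (1 : ℝ)) = 0) :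
    ∀ ω : ℝ, ‖(fun i => (C i : ℂ)) ⬝ᵥ
        ((((ω : ℂ) * Complex.I) • (1 : Matrix (Fin n) (Fin n) ℂ) +
          L.map (fun x : ℝ => (x : ℂ)))⁻¹ *ᵥ (fun i => (E i : ℂ)))‖ ≤
      Real.sqrt (∑ i, C i ^ 2) * Real.sqrt (∑ i, E i ^ 2) / lam2 := by
  intro ω
  have hRHS : 0 ≤ Real.sqrt (∑ i, C i ^ 2) * Real.sqrt (∑ i, E i ^ 2) / lam2 := by positivity
  rcases Nat.eq_zero_or_pos n with hn | hn
  · subst hn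
    simpa [dotProduct] using hRHS
  set M : Matrix (Fin n) (Fin n) ℂ :=
    ((ω : ℂ) * Complex.I) • (1 : Matrix (Fin n) (Fin n) ℂ) +
      L.map (fun x : ℝ => (x : ℂ)) with hM
  by_cases hdet : IsUnit M.det
  swap
  · rw [Matrix.nonsing_inv_apply_not_isUnit _ hdet]
    simpa [Matrix.zero_mulVec, dotProduct] using hRHS
  -- ω ≠ 0 since L is singular
  have hω : ω ≠ 0 := by
    rintro rfl
    simp only [Complex.ofReal_zero, zero_mul, zero_smul, zero_add] at hM
    have hLdet : L.det = 0 := by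
      rw [← Matrix.exists_mulVec_eq_zero_iff]
      exact ⟨fun _ => 1, Function.ne_iff.2 ⟨⟨0, hn⟩, one_ne_zero⟩, hL1⟩
    have : M.det = 0 := by
      rw [hM, show L.map (fun x : ℝ => (x : ℂ)) = Complex.ofRealHom.mapMatrix L from rfl,
        ← RingHom.map_det, hLdet, map_zero]
    rw [this] at hdet
    exact hdet.ne_zero rfl
  set x : Fin n → ℂ := M⁻¹ *ᵥ (fun i => (E i : ℂ)) with hx
  have hMx : M *ᵥ x = fun i => (E i : ℂ) := by
    rw [hx, Matrix.mulVec_mulVec, Matrix.mul_nonsing_inv _ hdet, Matrix.one_mulVec]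
  set u : Fin n → ℝ := fun i => (x i).re with hu
  set v : Fin n → ℝ := fun i => (x i).im with hv
  have hcomp : ∀ i, (ω : ℂ) * Complex.I * x i + ∑ j, (L i j : ℂ) * x j = (E i : ℂ) := by
    have h := hMx
    rw [hM, Matrix.add_mulVec, Matrix.smul_mulVec, Matrix.one_mulVec] at h
    intro i
    have h2 := congrFun h i
    simp only [Pi.add_apply, Pi.smul_apply, smul_eq_mul, Matrix.mulVec, dotProduct,
      Matrix.map_apply] at h2
    exact h2
  have hre : ∀ i, -(ω * v i) + ∑ j, L i j * u j = E i := by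
    intro i
    have h := congrArg Complex.re (hcomp i)
    simpa [Complex.add_re, Complex.mul_re, Complex.re_sum, hu, hv] using h
  have him : ∀ i, ω * u i + ∑ j, L i j * v j = 0 := by
    intro i
    have h := congrArg Complex.im (hcomp i)
    simpa [Complex.add_im, Complex.mul_im, Complex.im_sum, hu, hv] using h
  -- symmetry and row sums
  have hLsym : ∀ i j, L i j = L j i := by
    intro i j
    have := congrFun (congrFun hL.1 i) j
    simpa [Matrix.conjTranspose_apply] using this.symm
  have hrow : ∀ j, ∑ i, L i j = 0 := by
    intro j
    have h := congrFun hL1 j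
    simp only [Matrix.mulVec, dotProduct, mul_one, Pi.zero_apply] at h
    calc ∑ i, L i j = ∑ i, L j i := Finset.sum_congr rfl fun i _ => hLsym i j
      _ = 0 := h
  have hsumL : ∀ w : Fin n → ℝ, ∑ i, ∑ j, L i j * w j = 0 := by
    intro w
    rw [Finset.sum_comm]
    calc ∑ j, ∑ i, L i j * w j = ∑ j, (∑ i, L i j) * w j := by
          simp [Finset.sum_mul]
      _ = 0 := by simp [hrow]
  -- orthogonality of u and v to 𝟙
  have hu1 : ∑ i, u i = 0 := by
    have h : ∑ i, (ω * u i + ∑ j, L i j * v j) = 0 := by simp [him]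
    rw [Finset.sum_add_distrib, hsumL, ← Finset.mul_sum] at h
    have := mul_eq_zero.1 (by linarith : ω * ∑ i, u i = 0)
    tauto
  have hv1 : ∑ i, v i = 0 := by
    have hEsum : ∑ i, E i = 0 := by simpa [dotProduct] using hE
    have h : ∑ i, (-(ω * v i) + ∑ j, L i j * u j) = 0 := by
      rw [Finset.sum_congr rfl fun i _ => hre i]; exact hEsum
    rw [Finset.sum_add_distrib, hsumL, add_zero] at h
    have h2 : ω * ∑ i, v i = 0 := by
      have hneg : -(ω * ∑ i, v i) = 0 := by
        rw [Finset.mul_sum]; simpa using h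
      linarith
    have := mul_eq_zero.1 h2
    tauto
  -- spectral gap for u and v
  have hgu : lam2 * (∑ i, u i ^ 2) ≤ ∑ i, u i * ∑ j, L i j * u j := by
    have := hgap u (by simpa [dotProduct] using hu1)
    simpa [dotProduct, Matrix.mulVec] using this
  have hgv : lam2 * (∑ i, v i ^ 2) ≤ ∑ i, v i * ∑ j, L i j * v j := by
    have := hgap v (by simpa [dotProduct] using hv1)
    simpa [dotProduct, Matrix.mulVec] using this
  -- energy identity
  have h1 : ∑ i, u i * E i =
      -(ω * ∑ i, u i * v i) + ∑ i, u i * ∑ j, L i j * u j := by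
    calc ∑ i, u i * E i = ∑ i, u i * (-(ω * v i) + ∑ j, L i j * u j) :=
          Finset.sum_congr rfl fun i _ => by rw [hre i]
      _ = _ := by
          rw [Finset.sum_congr rfl fun i _ => show
              u i * (-(ω * v i) + ∑ j, L i j * u j) =
                -(ω * (u i * v i)) + u i * ∑ j, L i j * u j by ring,
            Finset.sum_add_distrib, Finset.sum_neg_distrib, Finset.mul_sum]
  have h2 : ω * ∑ i, v i * u i + ∑ i, v i * ∑ j, L i j * v j = 0 := by
    have : ∑ i, v i * (ω * u i + ∑ j, L i j * v j) = 0 := by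
      simp [him]
    simpa [mul_add, Finset.sum_add_distrib, Finset.mul_sum, mul_left_comm,
      mul_comm] using this
  have huv : ∑ i, u i * v i = ∑ i, v i * u i :=
    Finset.sum_congr rfl fun i _ => mul_comm _ _
  set S : ℝ := ∑ i, u i ^ 2 + ∑ i, v i ^ 2 with hS
  have hkey : lam2 * S ≤ ∑ i, u i * E i := by
    rw [hS, mul_add]
    rw [huv] at h1
    linarith
  have hcs : ∑ i, u i * E i ≤ Real.sqrt S * Real.sqrt (∑ i, E i ^ 2) := by
    refine le_trans (cs_sqrt u E) ?_
    have hle : Real.sqrt (∑ i, u i ^ 2) ≤ Real.sqrt S := by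
      refine Real.sqrt_le_sqrt ?_
      have : 0 ≤ ∑ i, v i ^ 2 := by positivity
      rw [hS]; linarith
    exact mul_le_mul_of_nonneg_right hle (Real.sqrt_nonneg _)
  have hSnn : 0 ≤ S := by positivity
  have hsqrtS : Real.sqrt S ≤ Real.sqrt (∑ i, E i ^ 2) / lam2 := by
    rcases eq_or_lt_of_le (Real.sqrt_nonneg S) with h0 | h0
    · rw [← h0]; positivity
    · rw [le_div_iff₀ hlam2]
      have hSsq : Real.sqrt S * Real.sqrt S = S := Real.mul_self_sqrt hSnn
      have : lam2 * (Real.sqrt S * Real.sqrt S) ≤ Real.sqrt S * Real.sqrt (∑ i, E i ^ 2) := by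
        rw [hSsq]; exact le_trans hkey hcs
      nlinarith
  -- final chain
  have habs : ‖(fun i => (C i : ℂ)) ⬝ᵥ x‖ ≤
      Real.sqrt (∑ i, C i ^ 2) * Real.sqrt S := by
    calc ‖(fun i => (C i : ℂ)) ⬝ᵥ x‖
        ≤ ∑ i, ‖(C i : ℂ) * x i‖ := norm_sum_le _ _
      _ = ∑ i, |C i| * ‖x i‖ := by
          exact Finset.sum_congr rfl fun i _ => by
            rw [norm_mul, Complex.norm_real, Real.norm_eq_abs]
      _ ≤ Real.sqrt (∑ i, |C i| ^ 2) * Real.sqrt (∑ i, ‖x i‖ ^ 2) :=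
          cs_sqrt _ _
      _ = Real.sqrt (∑ i, C i ^ 2) * Real.sqrt S := by
          have e1 : ∑ i, |C i| ^ 2 = ∑ i, C i ^ 2 :=
            Finset.sum_congr rfl fun i _ => sq_abs _
          have e2 : ∑ i, ‖x i‖ ^ 2 = S := by
            rw [hS, ← Finset.sum_add_distrib]
            refine Finset.sum_congr rfl fun i _ => ?_
            rw [Complex.sq_norm, Complex.normSq_apply, hu, hv]
            ring
          rw [e1, e2]
  calc ‖(fun i => (C i : ℂ)) ⬝ᵥ x‖
      ≤ Real.sqrt (∑ i, C i ^ 2) * Real.sqrt S := habs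
    _ ≤ Real.sqrt (∑ i, C i ^ 2) * (Real.sqrt (∑ i, E i ^ 2) / lam2) := by
        gcongr
    _ = Real.sqrt (∑ i, C i ^ 2) * Real.sqrt (∑ i, E i ^ 2) / lam2 := by ring
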